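/- All derivatives of the function P(t) = 1 − ∑_{j=1}^∞ (−1)^{j−1}·2^j·e^{−(2^j−1)t}·∏_{l=1}^j 1/(2^l−1) vanish at t = 0: P^{(k)}(0) = 0 for all k ≥ 1, and P(0) = 0. Consequently P is not analytic at 0 (it is not identically zero on any right neighborhood of 0). -/

import Mathlib

/-- The limiting distribution function
`P(t) = 1 - ∑_{j=1}^∞ (-1)^{j-1} 2^j e^{-(2^j-1)t} ∏_{l=1}^j (2^l-1)⁻¹`
(indices shifted by one here). -/
noncomputable def limP (t : ℝ) : ℝ :=
  1 - ∑' j : ℕ, (-1 : ℝ) ^ j * 2 ^ (j + 1) * Real.exp (-((2 : ℝ) ^ (j + 1) - 1) * t) *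
    ∏ l ∈ Finset.range (j + 1), ((2 : ℝ) ^ (l + 1) - 1)⁻¹

namespace LimPAux

noncomputable def mu (j : ℕ) : ℝ := 2 ^ j - 1
noncomputable def Bc (j : ℕ) : ℝ := 2 ^ j * ∏ l ∈ Finset.range j, ((2:ℝ) ^ (l+1) - 1)⁻¹

lemma mu_nonneg (j : ℕ) : 0 ≤ mu j := by
  simp only [mu, sub_nonneg]; exact one_le_pow₀ one_le_two

lemma mu_succ (j : ℕ) : mu (j+1) = 2 * mu j + 1 := by
  simp only [mu, pow_succ]; ring

lemma one_le_mu_succ (j : ℕ) : 1 ≤ mu (j+1) := by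
  have := mu_nonneg j; rw [mu_succ]; linarith

lemma prodc_pos (j : ℕ) : 0 < ∏ l ∈ Finset.range j, ((2:ℝ) ^ (l+1) - 1)⁻¹ := by
  apply Finset.prod_pos
  intro l _
  have : (2:ℝ) ≤ 2 ^ (l+1) := by
    calc (2:ℝ) = 2^1 := by norm_num
    _ ≤ 2 ^ (l+1) := pow_le_pow_right₀ one_le_two (by omega)
  have : (1:ℝ) ≤ 2 ^ (l+1) - 1 := by linarith
  positivity

lemma Bc_pos (j : ℕ) : 0 < Bc j := mul_pos (by positivity) (prodc_pos j)

lemma Bc_zero : Bc 0 = 1 := by simp [Bc]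

lemma mu_mul_Bc (j : ℕ) : mu (j+1) * Bc (j+1) = 2 * Bc j := by
  have hne : mu (j+1) ≠ 0 := by have := one_le_mu_succ j; linarith
  have hP := (prodc_pos j).ne'
  simp only [Bc, Finset.prod_range_succ]
  have hmu : ((2:ℝ)^(j+1) - 1) = mu (j+1) := rfl
  rw [hmu]
  calc mu (j+1) * (2^(j+1) * ((∏ l ∈ Finset.range j, ((2:ℝ) ^ (l+1) - 1)⁻¹) * (mu (j+1))⁻¹))
      = (2^(j+1) * (∏ l ∈ Finset.range j, ((2:ℝ) ^ (l+1) - 1)⁻¹)) * (mu (j+1) * (mu (j+1))⁻¹) := by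
        ring
    _ = 2 * Bc j := by
        rw [mul_inv_cancel₀ hne, mul_one, Bc, pow_succ]; ring

lemma two_pow_le_mu (j : ℕ) : (2:ℝ) ^ j ≤ mu (j+1) := by
  simp only [mu, pow_succ]
  nlinarith [one_le_pow₀ (M₀ := ℝ) (n := j) one_le_two]

lemma summable_main (k : ℕ) : Summable (fun j => Bc (j+1) * mu (j+1) ^ k) := by
  apply summable_of_ratio_norm_eventually_le (r := 1/2) (by norm_num)
  filter_upwards [Filter.eventually_ge_atTop (2*k+2)] with j hj
  have hBp := Bc_pos (j+1)
  have hBp2 := Bc_pos (j+2)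
  have hmu1 := one_le_mu_succ j
  have hmu2 := one_le_mu_succ (j+1)
  have hmun := mu_nonneg (j+1)
  rw [Real.norm_eq_abs, Real.norm_eq_abs, abs_of_pos (by positivity), abs_of_pos (by positivity)]
  -- key: mu (j+2) ≥ 4 * 3^k
  have hbig : (4:ℝ) * 3 ^ k ≤ mu (j+2) := by
    calc (4:ℝ) * 3^k ≤ 4 * 4^k := by
          gcongr; norm_num
    _ = 2 ^ (2*k+2) := by rw [pow_add, pow_mul]; norm_num [mul_comm]
    _ ≤ 2 ^ (j+1) := pow_le_pow_right₀ one_le_two (by omega)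
    _ ≤ mu (j+2) := two_pow_le_mu (j+1)
  -- mu (j+2) ≤ 3 * mu (j+1)
  have h3 : mu (j+2) ≤ 3 * mu (j+1) := by
    rw [mu_succ (j+1)]; linarith
  have hmupow : mu (j+2) ^ k ≤ 3^k * mu (j+1) ^ k := by
    calc mu (j+2) ^ k ≤ (3 * mu (j+1)) ^ k := by
          gcongr
    _ = 3^k * mu (j+1)^k := mul_pow 3 _ k
  -- Bc (j+2) = 2 * Bc (j+1) / mu (j+2)
  have hB : mu (j+2) * Bc (j+2) = 2 * Bc (j+1) := mu_mul_Bc (j+1)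
  have hmu2pos : (0:ℝ) < mu (j+2) := by linarith
  have h3kpos : (0:ℝ) < (3:ℝ)^k := by positivity
  -- goal: Bc (j+2) * mu (j+2)^k ≤ 1/2 * (Bc (j+1) * mu (j+1)^k)
  have step1 : mu (j+2) * (Bc (j+2) * mu (j+2)^k) = 2 * Bc (j+1) * mu (j+2) ^ k := by
    rw [← mul_assoc, hB]
  have step2 : 2 * Bc (j+1) * mu (j+2) ^ k ≤ 2 * 3^k * (Bc (j+1) * mu (j+1)^k) := by
    nlinarith [pow_nonneg hmun k]
  have step3 : (2:ℝ) * 3^k * (Bc (j+1) * mu (j+1)^k) ≤ mu (j+2) * (1/2 * (Bc (j+1) * mu (j+1)^k)) := by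
    rw [← mul_assoc]
    have hterm : (0:ℝ) ≤ Bc (j+1) * mu (j+1)^k := by positivity
    nlinarith
  nlinarith

noncomputable def trm (k j : ℕ) (t : ℝ) : ℝ :=
  (-1:ℝ)^j * Bc (j+1) * (-(mu (j+1)))^k * Real.exp (-(mu (j+1)) * t)

noncomputable def Dk (k : ℕ) (t : ℝ) : ℝ := (if k = 0 then (1:ℝ) else 0) - ∑' j, trm k j t

lemma abs_trm (k j : ℕ) (t : ℝ) :
    |trm k j t| = Bc (j+1) * mu (j+1) ^ k * Real.exp (-(mu (j+1)) * t) := by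
  have h1 := Bc_pos (j+1)
  have h2 := mu_nonneg (j+1)
  simp [trm, abs_mul, abs_pow, abs_neg, abs_of_nonneg h2, abs_of_pos h1, Real.abs_exp]

lemma summable_abs_trm (k : ℕ) {t : ℝ} (ht : 0 ≤ t) :
    Summable (fun j => Bc (j+1) * mu (j+1) ^ k * Real.exp (-(mu (j+1)) * t)) := by
  apply Summable.of_nonneg_of_le
    (fun j => by have h1 := Bc_pos (j+1); have h2 := mu_nonneg (j+1); positivity)
    (fun j => ?_) (summable_main k)
  have h1 := Bc_pos (j+1)
  have h2 := mu_nonneg (j+1)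
  have hexp : Real.exp (-(mu (j+1)) * t) ≤ 1 := Real.exp_le_one_iff.mpr (by nlinarith)
  have h3 : (0:ℝ) ≤ Bc (j+1) * mu (j+1)^k := by positivity
  nlinarith

lemma summable_trm (k : ℕ) {t : ℝ} (ht : 0 ≤ t) : Summable (fun j => trm k j t) := by
  apply Summable.of_norm
  simp only [Real.norm_eq_abs]
  exact (summable_abs_trm k ht).congr (fun j => (abs_trm k j t).symm)

lemma exp_neg_sub_le {a b : ℝ} (ha : 0 ≤ a) (hb : 0 ≤ b) :
    |Real.exp (-a) - Real.exp (-b)| ≤ |a - b| := by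
  wlog h : b ≤ a generalizing a b
  · rw [abs_sub_comm, abs_sub_comm a b]; exact this hb ha (le_of_not_ge h)
  have key : Real.exp (-b) * Real.exp (b - a) = Real.exp (-a) := by
    rw [← Real.exp_add]; ring_nf
  have h1 : Real.exp (-b) ≤ 1 := Real.exp_le_one_iff.mpr (by linarith)
  have h2 : 1 + (b - a) ≤ Real.exp (b - a) := by linarith [Real.add_one_le_exp (b-a)]
  have h3 : Real.exp (-a) ≤ Real.exp (-b) := Real.exp_le_exp.mpr (by linarith)
  have h4 : Real.exp (b - a) ≤ 1 := Real.exp_le_one_iff.mpr (by linarith)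
  rw [abs_of_nonpos (by linarith), abs_of_nonneg (by linarith)]
  nlinarith [Real.exp_pos (-b)]

lemma exp_taylor_bound {m t y : ℝ} (hm : 0 ≤ m) (ht : 0 ≤ t) (hy : 0 ≤ y) :
    |Real.exp (-m*y) - Real.exp (-m*t) + m*(y-t)*Real.exp (-m*t)| ≤ m^2 * (y-t)^2 := by
  set h : ℝ → ℝ := fun s => Real.exp (-m*s) + m*s*Real.exp (-m*t) with hh
  have hderiv : ∀ s ∈ Set.uIcc t y, HasDerivWithinAt h
      (-m * Real.exp (-m*s) + m * Real.exp (-m*t)) (Set.uIcc t y) s := by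
    intro s _
    have d1 : HasDerivAt (fun s : ℝ => -m*s) (-m) s := by
      simpa using (hasDerivAt_id s).const_mul (-m)
    have d2 : HasDerivAt (fun s : ℝ => Real.exp (-m*s)) (Real.exp (-m*s) * (-m)) s := d1.exp
    have d3 : HasDerivAt (fun s : ℝ => m*s*Real.exp (-m*t)) (m * Real.exp (-m*t)) s := by
      simpa [mul_comm, mul_assoc] using ((hasDerivAt_id s).const_mul m).mul_const (Real.exp (-m*t))
    have := d2.add d3
    apply HasDerivAt.hasDerivWithinAt
    convert this using 1
    · ext s; simp only [hh, Pi.add_apply]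
    · ring
  have hbound : ∀ s ∈ Set.uIcc t y, ‖-m * Real.exp (-m*s) + m * Real.exp (-m*t)‖ ≤ m^2 * |y - t| := by
    intro s hs
    have hs0 : 0 ≤ s := by
      rcases Set.mem_uIcc.mp hs with ⟨h1, _⟩ | ⟨h1, _⟩ <;> linarith
    have hst : |s - t| ≤ |y - t| := Set.abs_sub_left_of_mem_uIcc hs
    have hlip : |Real.exp (-(m*s)) - Real.exp (-(m*t))| ≤ |m*s - m*t| :=
      exp_neg_sub_le (by positivity) (by positivity)
    have heq : ‖-m * Real.exp (-m*s) + m * Real.exp (-m*t)‖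
        = m * |Real.exp (-(m*s)) - Real.exp (-(m*t))| := by
      rw [Real.norm_eq_abs, show -m * Real.exp (-m*s) + m * Real.exp (-m*t)
          = -(m * (Real.exp (-(m*s)) - Real.exp (-(m*t)))) by ring_nf, abs_neg, abs_mul,
          abs_of_nonneg hm]
    rw [heq]
    calc m * |Real.exp (-(m*s)) - Real.exp (-(m*t))| ≤ m * |m*s - m*t| :=
          mul_le_mul_of_nonneg_left hlip hm
      _ = m^2 * |s - t| := by rw [show m*s - m*t = m*(s-t) by ring, abs_mul, abs_of_nonneg hm]; ring
      _ ≤ m^2 * |y - t| := by nlinarith [abs_nonneg (s-t), abs_nonneg (y-t), sq_nonneg m]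
  have := (convex_uIcc t y).norm_image_sub_le_of_norm_hasDerivWithin_le hderiv hbound
    (Set.left_mem_uIcc) (Set.right_mem_uIcc)
  rw [Real.norm_eq_abs, Real.norm_eq_abs] at this
  have hexpand : h y - h t = Real.exp (-m*y) - Real.exp (-m*t) + m*(y-t)*Real.exp (-m*t) := by
    simp only [hh]; ring
  rw [hexpand] at this
  calc |Real.exp (-m*y) - Real.exp (-m*t) + m*(y-t)*Real.exp (-m*t)| ≤ m^2*|y-t| * |y-t| := this
    _ = m^2 * (y-t)^2 := by rw [mul_assoc, ← abs_mul, abs_mul_self]; ring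

lemma trm_succ (k j : ℕ) (t : ℝ) : trm (k+1) j t = (-(mu (j+1))) * trm k j t := by
  simp only [trm, pow_succ]; ring

lemma hasDerivWithinAt_sumtrm (k : ℕ) {t : ℝ} (ht : 0 ≤ t) :
    HasDerivWithinAt (fun x => ∑' j, trm k j x) (∑' j, trm (k+1) j t) (Set.Ici 0) t := by
  rw [hasDerivWithinAt_iff_tendsto_slope]
  set F : ℝ → ℝ := fun x => ∑' j, trm k j x with hF
  set d : ℝ := ∑' j, trm (k+1) j t with hd
  set K : ℝ := ∑' j, Bc (j+1) * mu (j+1) ^ (k+2) with hK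
  have hKnn : 0 ≤ K := tsum_nonneg (fun j => by
    have := Bc_pos (j+1); have := mu_nonneg (j+1); positivity)
  -- the pointwise bound
  have key : ∀ y ∈ Set.Ici (0:ℝ) \ {t}, |slope F t y - d| ≤ K * |y - t| := by
    intro y hy
    obtain ⟨hy0, hyt⟩ := hy
    have hy0 : (0:ℝ) ≤ y := hy0
    have hyt : y ≠ t := hyt
    have hyt' : y - t ≠ 0 := sub_ne_zero.mpr hyt
    set u : ℕ → ℝ := fun j => (y - t)⁻¹ * (trm k j y - trm k j t) - (-(mu (j+1))) * trm k j t
      with hu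
    have hsy := summable_trm k hy0
    have hst := summable_trm k ht
    have hs1 : Summable (fun j => (y - t)⁻¹ * (trm k j y - trm k j t)) :=
      (hsy.sub hst).mul_left _
    have hs2 : Summable (fun j => (-(mu (j+1))) * trm k j t) :=
      (summable_trm (k+1) ht).congr (fun j => trm_succ k j t)
    have hsum_u : Summable u := hs1.sub hs2
    -- slope F t y - d = ∑' u
    have heq : slope F t y - d = ∑' j, u j := by
      rw [slope_def_field]
      have e1 : F y - F t = ∑' j, (trm k j y - trm k j t) := (hsy.tsum_sub hst).symm
      have e2 : d = ∑' j, (-(mu (j+1))) * trm k j t := tsum_congr (fun j => trm_succ k j t)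
      rw [div_eq_inv_mul, e1, e2, ← tsum_mul_left, ← hs1.tsum_sub hs2]
    rw [heq]
    -- per-term bound
    have hub : ∀ j, |u j| ≤ Bc (j+1) * mu (j+1) ^ (k+2) * |y - t| := by
      intro j
      have hBp := Bc_pos (j+1)
      have hmn := mu_nonneg (j+1)
      set c : ℝ := (-1:ℝ)^j * Bc (j+1) * (-(mu (j+1)))^k with hc
      have habs_c : |c| = Bc (j+1) * mu (j+1) ^ k := by
        simp [hc, abs_mul, abs_pow, abs_neg, abs_of_nonneg hmn, abs_of_pos hBp]
      have htrm : ∀ x : ℝ, trm k j x = c * Real.exp (-(mu (j+1)) * x) := fun x => rfl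
      have huj : u j = (y - t)⁻¹ * c *
          (Real.exp (-(mu (j+1))*y) - Real.exp (-(mu (j+1))*t)
            + mu (j+1)*(y-t)*Real.exp (-(mu (j+1))*t)) := by
        rw [hu]; simp only [htrm]; field_simp; ring
      rw [huj, abs_mul, abs_mul, abs_inv]
      have htb := exp_taylor_bound hmn ht hy0
      calc |y - t|⁻¹ * |c| * |Real.exp (-(mu (j+1))*y) - Real.exp (-(mu (j+1))*t)
            + mu (j+1)*(y-t)*Real.exp (-(mu (j+1))*t)|
          ≤ |y - t|⁻¹ * |c| * (mu (j+1)^2 * (y-t)^2) := by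
            apply mul_le_mul_of_nonneg_left htb (by positivity)
        _ = |c| * mu (j+1)^2 * (|y-t|⁻¹ * (y-t)^2) := by ring
        _ = |c| * mu (j+1)^2 * |y - t| := by
            have hstep : |y-t|⁻¹ * (y-t)^2 = |y - t| := by
              rw [← sq_abs, pow_two, ← mul_assoc, inv_mul_cancel₀ (abs_ne_zero.mpr hyt'), one_mul]
            rw [hstep]
        _ = Bc (j+1) * mu (j+1) ^ (k+2) * |y - t| := by
            rw [habs_c]; ring
    have hmaj : Summable (fun j => Bc (j+1) * mu (j+1) ^ (k+2) * |y - t|) :=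
      (summable_main (k+2)).mul_right _
    have habs_sum : Summable (fun j => |u j|) :=
      Summable.of_nonneg_of_le (fun j => abs_nonneg _) hub hmaj
    have habs_sum' : Summable (fun j => ‖u j‖) :=
      habs_sum.congr (fun j => (Real.norm_eq_abs _).symm)
    calc |∑' j, u j| ≤ ∑' j, |u j| := by
          have h := norm_tsum_le_tsum_norm habs_sum'
          rw [Real.norm_eq_abs] at h
          calc |∑' j, u j| ≤ ∑' j, ‖u j‖ := h
            _ = ∑' j, |u j| := tsum_congr (fun j => Real.norm_eq_abs _)
      _ ≤ ∑' j, Bc (j+1) * mu (j+1) ^ (k+2) * |y - t| := Summable.tsum_le_tsum hub habs_sum hmaj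
      _ = K * |y - t| := by rw [hK, tsum_mul_right]
  -- squeeze
  have htend : Filter.Tendsto (fun y => K * |y - t|) (nhdsWithin t (Set.Ici 0 \ {t})) (nhds 0) := by
    have : Filter.Tendsto (fun y : ℝ => K * |y - t|) (nhds t) (nhds (K * |t - t|)) := by
      apply Filter.Tendsto.const_mul
      exact (continuous_abs.comp (continuous_id.sub continuous_const)).tendsto t
    simpa using this.mono_left nhdsWithin_le_nhds
  rw [show (nhds d) = nhds d from rfl, ← tendsto_sub_nhds_zero_iff]
  apply squeeze_zero_norm' _ htend
  filter_upwards [self_mem_nhdsWithin] with y hy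
  exact key y hy

lemma mu_zero : mu 0 = 0 := by simp [mu]

lemma summable_Bmu (k : ℕ) : Summable (fun j => Bc j * mu j ^ k) :=
  (summable_nat_add_iff 1).mp (summable_main k)

lemma summable_hterm (k : ℕ) : Summable (fun j => (-1:ℝ)^j * Bc j * mu j ^ k) := by
  apply Summable.of_norm
  apply (summable_Bmu k).congr
  intro j
  have h1 := Bc_pos j
  have h2 := mu_nonneg j
  simp [Real.norm_eq_abs, abs_mul, abs_pow, abs_of_pos h1, abs_of_nonneg h2]

noncomputable def hs (k : ℕ) : ℝ := ∑' j, (-1:ℝ)^j * Bc j * mu j ^ k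

-- h_0 = 0 via telescoping
lemma hs_zero : hs 0 = 0 := by
  have hsum : HasSum (fun j => (-1:ℝ)^j * Bc j * mu j ^ 0) (hs 0) := (summable_hterm 0).hasSum
  have htend := hsum.tendsto_sum_nat
  set Pr : ℕ → ℝ := fun n => ∏ l ∈ Finset.range n, ((2:ℝ)^(l+1) - 1)⁻¹ with hPr
  have hpartial : ∀ n, ∑ j ∈ Finset.range (n+1), (-1:ℝ)^j * Bc j * mu j ^ 0 = (-1)^n * Pr n := by
    intro n
    induction n with
    | zero => simp [Bc_zero, hPr]
    | succ n ihn =>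
      rw [Finset.sum_range_succ, ihn]
      have hne : ((2:ℝ)^(n+1) - 1) ≠ 0 := by
        have : (2:ℝ) ≤ 2^(n+1) := by
          calc (2:ℝ) = 2^1 := by norm_num
          _ ≤ 2^(n+1) := pow_le_pow_right₀ one_le_two (by omega)
        linarith
      have hPrs : Pr (n+1) = Pr n * ((2:ℝ)^(n+1)-1)⁻¹ := Finset.prod_range_succ _ n
      have key : Pr n = ((2:ℝ)^(n+1) - 1) * Pr (n+1) := by
        rw [hPrs]; field_simp
      have hBc : Bc (n+1) = (2:ℝ)^(n+1) * Pr (n+1) := rfl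
      rw [pow_zero, mul_one, hBc, key, pow_succ (-1:ℝ) n]
      ring
  have hPr_le : ∀ n, Pr (n+1) ≤ (1/2:ℝ)^n := by
    intro n
    induction n with
    | zero => norm_num [hPr]
    | succ n ihn =>
      have hPrs : Pr (n+2) = Pr (n+1) * ((2:ℝ)^(n+2)-1)⁻¹ := Finset.prod_range_succ _ (n+1)
      have h4 : (4:ℝ) ≤ 2^(n+2) := by
        calc (4:ℝ) = 2^2 := by norm_num
        _ ≤ 2^(n+2) := pow_le_pow_right₀ one_le_two (by omega)
      have hinv : ((2:ℝ)^(n+2)-1)⁻¹ ≤ 1/2 := by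
        rw [inv_le_comm₀ (by linarith) (by norm_num)]
        linarith
      have hnn := (prodc_pos (n+1)).le
      calc Pr (n+2) = Pr (n+1) * ((2:ℝ)^(n+2)-1)⁻¹ := hPrs
        _ ≤ (1/2:ℝ)^n * (1/2) := by
            apply mul_le_mul ihn hinv (by rw [inv_nonneg]; linarith) (by positivity)
        _ = (1/2:ℝ)^(n+1) := by rw [pow_succ]
  have h2 : Filter.Tendsto (fun n => (-1:ℝ)^(n+1) * Pr (n+1)) Filter.atTop (nhds 0) := by
    apply squeeze_zero_norm (a := fun n => (1/2:ℝ)^n)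
    · intro n
      rw [Real.norm_eq_abs, abs_mul, abs_pow, abs_neg, abs_one, one_pow, one_mul,
        abs_of_pos (prodc_pos (n+1))]
      exact hPr_le n
    · exact tendsto_pow_atTop_nhds_zero_of_lt_one (by norm_num) (by norm_num)
  have h3 : Filter.Tendsto (fun n => (-1:ℝ)^n * Pr n) Filter.atTop (nhds 0) :=
    (Filter.tendsto_add_atTop_iff_nat 1).mp h2
  have h4 : Filter.Tendsto (fun n => ∑ j ∈ Finset.range (n+1), (-1:ℝ)^j * Bc j * mu j ^ 0)
      Filter.atTop (nhds (hs 0)) := (Filter.tendsto_add_atTop_iff_nat 1).mpr htend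
  have h5 : Filter.Tendsto (fun n => (-1:ℝ)^n * Pr n) Filter.atTop (nhds (hs 0)) :=
    h4.congr hpartial
  exact tendsto_nhds_unique h5 h3

-- recursion + strong induction: all hs k = 0
lemma hs_eq_zero (k : ℕ) : hs k = 0 := by
  induction k using Nat.strong_induction_on with
  | _ k IH =>
    match k with
    | 0 => exact hs_zero
    | (n+1) =>
      have h0 : ((-1:ℝ)^0 * Bc 0 * mu 0 ^ (n+1)) = 0 := by
        simp [mu_zero, zero_pow (Nat.succ_ne_zero n)]
      have hshift : hs (n+1) = ∑' m, (-1:ℝ)^(m+1) * Bc (m+1) * mu (m+1) ^ (n+1) := by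
        rw [hs, Summable.tsum_eq_zero_add (summable_hterm (n+1)), h0, zero_add]
      -- rewrite each term via binomial
      have hterm : ∀ m, (-1:ℝ)^(m+1) * Bc (m+1) * mu (m+1) ^ (n+1)
          = ∑ i ∈ Finset.range (n+1), (-(2:ℝ)) * ((n.choose i : ℝ) * 2^i *
              ((-1:ℝ)^m * Bc m * mu m ^ i)) := by
        intro m
        have e1 : mu (m+1) ^ (n+1) = mu (m+1) * mu (m+1) ^ n := by rw [pow_succ]; ring
        have e2 : (-1:ℝ)^(m+1) * Bc (m+1) * mu (m+1) ^ (n+1)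
            = (-1:ℝ)^(m+1) * (mu (m+1) * Bc (m+1)) * mu (m+1) ^ n := by rw [e1]; ring
        rw [e2, mu_mul_Bc m, mu_succ m, add_pow]
        rw [Finset.mul_sum]
        apply Finset.sum_congr rfl
        intro i _
        rw [mul_pow, pow_succ]
        push_cast
        ring
      rw [hshift]
      calc ∑' m, (-1:ℝ)^(m+1) * Bc (m+1) * mu (m+1) ^ (n+1)
          = ∑' m, ∑ i ∈ Finset.range (n+1), (-(2:ℝ)) * ((n.choose i : ℝ) * 2^i *
              ((-1:ℝ)^m * Bc m * mu m ^ i)) := tsum_congr hterm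
        _ = ∑ i ∈ Finset.range (n+1), ∑' m, (-(2:ℝ)) * ((n.choose i : ℝ) * 2^i *
              ((-1:ℝ)^m * Bc m * mu m ^ i)) := by
            apply Summable.tsum_finsetSum
            intro i _
            exact ((summable_hterm i).mul_left _).mul_left _
        _ = 0 := by
            apply Finset.sum_eq_zero
            intro i hi
            rw [tsum_mul_left, tsum_mul_left]
            have : hs i = 0 := IH i (by simp at hi; omega)
            rw [hs] at this
            rw [this, mul_zero, mul_zero]

lemma limP_eq_D0 : limP = Dk 0 := by
  funext t
  rw [limP, Dk, if_pos rfl]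
  congr 1
  apply tsum_congr
  intro j
  rw [trm, Bc, pow_zero]
  show _ = (-1:ℝ)^j * ((2:ℝ)^(j+1) * ∏ l ∈ Finset.range (j+1), ((2:ℝ)^(l+1) - 1)⁻¹) * 1 *
    Real.exp (-((2:ℝ)^(j+1) - 1) * t)
  ring

lemma hasDerivWithinAt_Dk (k : ℕ) {t : ℝ} (ht : 0 ≤ t) :
    HasDerivWithinAt (Dk k) (Dk (k+1) t) (Set.Ici 0) t := by
  have h := (hasDerivWithinAt_sumtrm k ht).const_sub (if k = 0 then (1:ℝ) else 0)
  have he : Dk (k+1) t = -(∑' j, trm (k+1) j t) := by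
    rw [Dk, if_neg (Nat.succ_ne_zero k)]; ring
  rw [he]
  exact h

lemma iter_eq (k : ℕ) : Set.EqOn (iteratedDerivWithin k limP (Set.Ici 0)) (Dk k) (Set.Ici 0) := by
  induction k with
  | zero =>
    intro x _
    rw [iteratedDerivWithin_zero, limP_eq_D0]
  | succ k ih =>
    intro x hx
    have hu : UniqueDiffWithinAt ℝ (Set.Ici (0:ℝ)) x := (uniqueDiffOn_Ici 0) x hx
    rw [iteratedDerivWithin_succ, derivWithin_congr ih (ih hx),
      (hasDerivWithinAt_Dk k hx).derivWithin hu]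

lemma Dk_zero (k : ℕ) : Dk k 0 = 0 := by
  have hsplit : hs k = ((-1:ℝ)^0 * Bc 0 * mu 0 ^ k)
      + ∑' m, (-1:ℝ)^(m+1) * Bc (m+1) * mu (m+1) ^ k := Summable.tsum_eq_zero_add (summable_hterm k)
  have hf0 : ((-1:ℝ)^0 * Bc 0 * mu 0 ^ k) = (if k = 0 then (1:ℝ) else 0) := by
    cases k with
    | zero => simp [Bc_zero]
    | succ n => simp [Bc_zero, mu_zero, zero_pow (Nat.succ_ne_zero n)]
  have htail : ∑' m, (-1:ℝ)^(m+1) * Bc (m+1) * mu (m+1) ^ k = -(if k = 0 then (1:ℝ) else 0) := by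
    have h := hsplit
    rw [hs_eq_zero k, hf0] at h
    linarith
  have htrm0 : ∀ m, trm k m 0 = ((-1:ℝ)^k) * -((-1:ℝ)^(m+1) * Bc (m+1) * mu (m+1) ^ k) := by
    intro m
    rw [trm, mul_zero, Real.exp_zero, mul_one, neg_pow, pow_succ]
    ring
  have hsum : ∑' m, trm k m 0
      = ((-1:ℝ)^k) * -(∑' m, (-1:ℝ)^(m+1) * Bc (m+1) * mu (m+1) ^ k) := by
    rw [← tsum_neg, ← tsum_mul_left]
    exact tsum_congr htrm0
  rw [Dk, hsum, htail]
  cases k with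
  | zero => norm_num
  | succ n => simp

lemma sum_B_exp {s : ℝ} (hs : 0 ≤ s) :
    ∑' j, (-1:ℝ)^j * Bc j * Real.exp (-(mu j) * s) = Dk 0 s := by
  have hsummable : Summable (fun j => (-1:ℝ)^j * Bc j * Real.exp (-(mu j) * s)) := by
    apply Summable.of_norm
    apply Summable.of_nonneg_of_le (fun j => norm_nonneg _) (fun j => ?_)
      ((summable_Bmu 0).congr (fun j => by rw [pow_zero, mul_one]))
    have h1 := Bc_pos j
    have h2 := mu_nonneg j
    have hexp : Real.exp (-(mu j) * s) ≤ 1 := Real.exp_le_one_iff.mpr (by nlinarith)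
    rw [Real.norm_eq_abs, abs_mul, abs_mul, abs_pow, abs_neg, abs_one, one_pow, one_mul,
      abs_of_pos h1, Real.abs_exp]
    nlinarith
  rw [Summable.tsum_eq_zero_add hsummable]
  have h0 : ((-1:ℝ)^0 * Bc 0 * Real.exp (-(mu 0) * s)) = 1 := by
    simp [Bc_zero, mu_zero]
  have htail : ∀ m, (-1:ℝ)^(m+1) * Bc (m+1) * Real.exp (-(mu (m+1)) * s) = -(trm 0 m s) := by
    intro m
    simp only [trm, pow_zero, mul_one, pow_succ]
    ring
  rw [h0, Dk, if_pos rfl]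
  congr 1
  rw [← tsum_neg]
  exact tsum_congr htail

lemma D1_eq {t : ℝ} (ht : 0 ≤ t) : Dk 1 t = 2 * Real.exp (-t) * Dk 0 (2*t) := by
  have htrm : ∀ j, trm 1 j t
      = (-(2 * Real.exp (-t))) * ((-1:ℝ)^j * Bc j * Real.exp (-(mu j) * (2*t))) := by
    intro j
    have e1 : trm 1 j t = -((-1:ℝ)^j * (mu (j+1) * Bc (j+1)) * Real.exp (-(mu (j+1)) * t)) := by
      simp only [trm, pow_one]; ring
    rw [e1, mu_mul_Bc j]
    have e2 : -(mu (j+1)) * t = (-t) + (-(mu j) * (2*t)) := by rw [mu_succ]; ring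
    rw [e2, Real.exp_add]
    ring
  have : ∑' j, trm 1 j t
      = (-(2 * Real.exp (-t))) * ∑' j, ((-1:ℝ)^j * Bc j * Real.exp (-(mu j) * (2*t))) := by
    rw [← tsum_mul_left]
    exact tsum_congr htrm
  rw [Dk, this, sum_B_exp (by linarith : (0:ℝ) ≤ 2*t)]
  norm_num

lemma Bc_tail_le (j : ℕ) : Bc (j+3) ≤ (8/21) * (2/3:ℝ)^j := by
  induction j with
  | zero =>
    have : Bc 3 = 8/21 := by
      norm_num [Bc, Finset.prod_range_succ]
    rw [this]; norm_num
  | succ j ihj =>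
    have hmu : (3:ℝ) ≤ mu (j+4) := by
      have := two_pow_le_mu (j+3)
      have h8 : (8:ℝ) ≤ 2^(j+3) := by
        calc (8:ℝ) = 2^3 := by norm_num
        _ ≤ 2^(j+3) := pow_le_pow_right₀ one_le_two (by omega)
      linarith
    have hB := mu_mul_Bc (j+3)  -- mu (j+4) * Bc (j+4) = 2 * Bc (j+3)
    have hBp := Bc_pos (j+4)
    have hBp3 := Bc_pos (j+3)
    have step : Bc (j+4) ≤ (2/3) * Bc (j+3) := by nlinarith
    calc Bc (j+1+3) ≤ (2/3) * Bc (j+3) := step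
      _ ≤ (2/3) * ((8/21) * (2/3:ℝ)^j) := by nlinarith
      _ = (8/21) * (2/3:ℝ)^(j+1) := by rw [pow_succ]; ring

lemma D0_one_pos : 0 < Dk 0 1 := by
  set w : ℕ → ℝ := fun j => Bc (j+1) * mu (j+1) ^ 0 * Real.exp (-(mu (j+1)) * 1) with hw
  have hwsum : Summable w := summable_abs_trm 0 (by norm_num)
  have hS_le : ∑' j, trm 0 j 1 ≤ ∑' j, w j := by
    apply Summable.tsum_le_tsum (fun j => ?_) (summable_trm 0 (by norm_num)) hwsum
    calc trm 0 j 1 ≤ |trm 0 j 1| := le_abs_self _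
      _ = w j := abs_trm 0 j 1
  have hw0 : w 0 = 2 * Real.exp (-1) := by
    simp only [hw, pow_zero, mul_one]
    have h1 : Bc 1 = 2 := by norm_num [Bc, Finset.prod_range_succ]
    have h2 : mu 1 = 1 := by norm_num [mu]
    rw [h1, h2]
  have hw1 : w 1 = (4/3) * Real.exp (-3) := by
    simp only [hw, pow_zero, mul_one]
    have h1 : Bc 2 = 4/3 := by norm_num [Bc, Finset.prod_range_succ]
    have h2 : mu 2 = 3 := by norm_num [mu]
    rw [h1, h2]
  have hwsum1 : Summable (fun j => w (j+1)) := (summable_nat_add_iff 1).mpr hwsum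
  have hwsum2 : Summable (fun j => w (j+2)) := (summable_nat_add_iff 2).mpr hwsum
  have hsplit : ∑' j, w j = w 0 + (w 1 + ∑' j, w (j+2)) := by
    rw [Summable.tsum_eq_zero_add hwsum]
    congr 1
    rw [Summable.tsum_eq_zero_add hwsum1]
  have htail : ∑' j, w (j+2) ≤ (8/7) * Real.exp (-7) := by
    have hgeo : Summable (fun j : ℕ => (8/21) * Real.exp (-7) * (2/3:ℝ)^j) :=
      (summable_geometric_of_lt_one (by norm_num) (by norm_num)).mul_left _
    have hbound : ∀ j, w (j+2) ≤ (8/21) * Real.exp (-7) * (2/3:ℝ)^j := by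
      intro j
      have hB := Bc_tail_le j
      have hmu7 : (7:ℝ) ≤ mu (j+3) := by
        have hdef : mu (j+3) = (2:ℝ)^(j+3) - 1 := rfl
        have h8 : (8:ℝ) ≤ 2^(j+3) := by
          calc (8:ℝ) = 2^3 := by norm_num
          _ ≤ 2^(j+3) := pow_le_pow_right₀ one_le_two (by omega)
        rw [hdef]; linarith
      have hexp : Real.exp (-(mu (j+3))) ≤ Real.exp (-7) := by
        apply Real.exp_le_exp.mpr; linarith
      have hBp := Bc_pos (j+3)
      have hgp : (0:ℝ) < (2/3:ℝ)^j := by positivity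
      simp only [hw, pow_zero, mul_one]
      calc Bc (j+2+1) * Real.exp (-(mu (j+2+1)))
          ≤ ((8/21) * (2/3:ℝ)^j) * Real.exp (-7) := by
            apply mul_le_mul hB hexp (Real.exp_pos _).le (by positivity)
        _ = (8/21) * Real.exp (-7) * (2/3:ℝ)^j := by ring
    calc ∑' j, w (j+2) ≤ ∑' j : ℕ, (8/21) * Real.exp (-7) * (2/3:ℝ)^j :=
          Summable.tsum_le_tsum hbound hwsum2 hgeo
      _ = (8/21) * Real.exp (-7) * (1 - 2/3)⁻¹ := by
          rw [tsum_mul_left, tsum_geometric_of_lt_one (by norm_num) (by norm_num)]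
      _ = (8/7) * Real.exp (-7) := by
          have h3 : ((1:ℝ) - 2/3)⁻¹ = 3 := by norm_num
          rw [h3]; ring
  -- numeric bound
  have hx : Real.exp (-1) < 0.37 := by
    have h1 := Real.exp_one_gt_d9
    have h2 : Real.exp (-1) * Real.exp 1 = 1 := by
      rw [← Real.exp_add]; norm_num
    nlinarith [Real.exp_pos (-1)]
  have hxpos := Real.exp_pos (-1)
  have he3 : Real.exp (-3) = Real.exp (-1) ^ 3 := by
    rw [← Real.exp_nat_mul]; norm_num
  have he7 : Real.exp (-7) = Real.exp (-1) ^ 7 := by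
    rw [← Real.exp_nat_mul]; norm_num
  have hx3 : Real.exp (-1)^3 < 0.0507 := by
    have := pow_lt_pow_left₀ hx hxpos.le (n := 3) (by norm_num)
    have h37 : ((0.37:ℝ))^3 < 0.0507 := by norm_num
    linarith
  have hx7 : Real.exp (-1)^7 ≤ Real.exp (-1)^3 := by
    apply pow_le_pow_of_le_one hxpos.le (by linarith) (by omega)
  have hnum : 2 * Real.exp (-1) + (4/3) * Real.exp (-3) + (8/7) * Real.exp (-7) < 1 := by
    rw [he3, he7]; linarith
  have : ∑' j, trm 0 j 1 < 1 := by
    calc ∑' j, trm 0 j 1 ≤ ∑' j, w j := hS_le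
      _ = w 0 + (w 1 + ∑' j, w (j+2)) := hsplit
      _ ≤ 2 * Real.exp (-1) + ((4/3) * Real.exp (-3) + (8/7) * Real.exp (-7)) := by
          rw [hw0, hw1]; linarith
      _ < 1 := by linarith
  rw [Dk, if_pos rfl]
  linarith

end LimPAux

open LimPAux in
/-- `P(0) = 0`, all derivatives of `P` (taken on `[0,∞)`) vanish at `0`, yet `P` is not
identically zero on any right neighborhood of `0`; hence `P` is not analytic at `0`. -/
theorem limP_flat_at_zero :
    limP 0 = 0 ∧
    (∀ k : ℕ, 1 ≤ k → iteratedDerivWithin k limP (Set.Ici 0) 0 = 0) ∧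
    (∀ ε : ℝ, 0 < ε → ∃ t : ℝ, 0 < t ∧ t < ε ∧ limP t ≠ 0) := by
  have hmem0 : (0:ℝ) ∈ Set.Ici (0:ℝ) := Set.mem_Ici.mpr le_rfl
  refine ⟨?_, ?_, ?_⟩
  · rw [limP_eq_D0]; exact Dk_zero 0
  · intro k _
    rw [iter_eq k hmem0]
    exact Dk_zero k
  · intro ε hε
    by_contra hcon
    push_neg at hcon
    have key : ∀ n : ℕ, ∀ t : ℝ, 0 < t → t < 2^n * ε → limP t = 0 := by
      intro n
      induction n with
      | zero => simpa using hcon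
      | succ n ih =>
        intro t ht htl
        have h2 : 0 < t/2 := by linarith
        have h2' : t/2 < 2^n * ε := by
          rw [pow_succ] at htl; linarith
        have h1 : HasDerivWithinAt limP (Dk 1 (t/2)) (Set.Ici 0) (t/2) := by
          rw [limP_eq_D0]; exact hasDerivWithinAt_Dk 0 h2.le
        have h1' : HasDerivAt limP (Dk 1 (t/2)) (t/2) :=
          h1.hasDerivAt (Ici_mem_nhds h2)
        have h0' : HasDerivAt limP 0 (t/2) := by
          have hev : limP =ᶠ[nhds (t/2)] (fun _ => (0:ℝ)) := by
            filter_upwards [Ioo_mem_nhds h2 h2'] with s hs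
            exact ih s hs.1 hs.2
          exact (hasDerivAt_const (t/2) (0:ℝ)).congr_of_eventuallyEq hev
        have hD1 : Dk 1 (t/2) = 0 := h1'.unique h0'
        rw [D1_eq h2.le] at hD1
        have h2E : (2:ℝ) * Real.exp (-(t/2)) ≠ 0 := by positivity
        rcases mul_eq_zero.mp hD1 with h | h
        · exact absurd h h2E
        · rw [show (2:ℝ)*(t/2) = t by ring] at h
          rw [limP_eq_D0]
          exact h
    obtain ⟨n, hn⟩ : ∃ n : ℕ, 1 < 2^n * ε := by
      obtain ⟨n, hn⟩ := pow_unbounded_of_one_lt (1/ε) (one_lt_two (α := ℝ))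
      exact ⟨n, by rw [div_lt_iff₀ hε] at hn; linarith⟩
    have hone : limP 1 = 0 := key n 1 one_pos hn
    have : 0 < limP 1 := by rw [limP_eq_D0]; exact D0_one_pos
    linarith
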